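/- arXiv:2511.17086 — 2 statements merged into one kernel-verified Lean document; each statement's English description precedes it below -/
import Mathlib

section
/- Let V be a real vector space of dimension 2m with complex structure J and two J-compatible positive symplectic forms ω and ω₁ written in a common J-adapted basis as ω = Σ_j e_j* ∧ Je_j* and ω₁ = Σ_j λ_j e_j* ∧ Je_j* with all λ_j > 0. Then for every integer k with 0 ≤ k ≤ m-1 there exists a positive J-(1,1) form ω^{(k)} = Σ_j μ_j^{(k)} e_j* ∧ Je_j* with all μ_j^{(k)} > 0 such that (ω^{(k)})^{m-1} = ω^{m-1-k} ∧ ω₁^{k}. -/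
open ExteriorAlgebra Finset

lemma aux_iota_swap {R M : Type*} [CommRing R] [AddCommGroup M] [Module R M] (x y : M) :
    ι R x * ι R y = -(ι R y * ι R x) :=
  eq_neg_of_add_eq_zero_left (ι_add_mul_swap x y)

lemma aux_pair_sq_zero {R M : Type*} [CommRing R] [AddCommGroup M] [Module R M] (x y : M) :
    (ι R x * ι R y) * (ι R x * ι R y) = 0 := by
  have h : (ι R x * ι R y) * (ι R x * ι R y) =
      ι R x * (ι R y * ι R x + ι R x * ι R y) * ι R y - (ι R x * ι R x) * (ι R y * ι R y) := by
    noncomm_ring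
  rw [h, ι_add_mul_swap, ι_sq_zero, mul_zero, zero_mul, zero_mul, sub_zero]

lemma aux_pair_comm {R M : Type*} [CommRing R] [AddCommGroup M] [Module R M] (x y u v : M) :
    (ι R x * ι R y) * (ι R u * ι R v) = (ι R u * ι R v) * (ι R x * ι R y) := by
  calc (ι R x * ι R y) * (ι R u * ι R v)
      = ι R x * (ι R y * ι R u) * ι R v := by noncomm_ring
    _ = ι R x * (-(ι R u * ι R y)) * ι R v := by rw [aux_iota_swap y u]
    _ = -((ι R x * ι R u) * (ι R y * ι R v)) := by noncomm_ring
    _ = -((-(ι R u * ι R x)) * (ι R y * ι R v)) := by rw [aux_iota_swap x u]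
    _ = ι R u * ι R x * (ι R y * ι R v) := by noncomm_ring
    _ = ι R u * ι R x * (-(ι R v * ι R y)) := by rw [aux_iota_swap y v]
    _ = -(ι R u * (ι R x * ι R v) * ι R y) := by noncomm_ring
    _ = -(ι R u * (-(ι R v * ι R x)) * ι R y) := by rw [aux_iota_swap x v]
    _ = (ι R u * ι R v) * (ι R x * ι R y) := by noncomm_ring

lemma aux_sum_pow_expand {A : Type*} [CommRing A] {ι : Type*} [DecidableEq ι]
    (z : ι → A) (hz : ∀ j, z j * z j = 0) (s : Finset ι) (n : ℕ) :
    (∑ j ∈ s, z j) ^ n = (n.factorial : A) * ∑ S ∈ s.powersetCard n, ∏ j ∈ S, z j := by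
  induction s using Finset.induction_on generalizing n with
  | empty =>
    cases n with
    | zero => simp
    | succ n =>
      rw [Finset.powersetCard_eq_empty.2 (by simp)]
      simp [zero_pow]
  | @insert a s ha ih =>
    cases n with
    | zero => simp
    | succ n =>
      have hzp : ∀ p : ℕ, z a ^ (p + 2) = 0 := by
        intro p
        have : z a ^ (p + 2) = z a ^ p * (z a * z a) := by ring
        rw [this, hz, mul_zero]
      rw [Finset.sum_insert ha, add_pow]
      rw [Finset.sum_range_succ', Finset.sum_range_succ']
      have hvan : ∀ i ∈ Finset.range n, z a ^ (i + 1 + 1) * (∑ j ∈ s, z j) ^ (n + 1 - (i + 1 + 1)) *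
          ((n + 1).choose (i + 1 + 1) : A) = 0 := by
        intro i _
        rw [hzp i, zero_mul, zero_mul]
      rw [Finset.sum_eq_zero hvan, zero_add]
      -- remaining: z a ^ 1 * y ^ n * C(n+1,1) + z a ^ 0 * y ^ (n+1) * C(n+1,0)
      rw [Finset.powersetCard_succ_insert ha, Finset.sum_union, Finset.sum_image]
      · have hins : ∀ S ∈ s.powersetCard n, ∏ j ∈ insert a S, z j = z a * ∏ j ∈ S, z j := by
          intro S hS
          have haS : a ∉ S := fun h => ha ((Finset.mem_powersetCard.1 hS).1 h)
          rw [Finset.prod_insert haS]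
        rw [Finset.sum_congr rfl hins, ← Finset.mul_sum]
        simp only [zero_add, pow_one, pow_zero, Nat.choose_one_right, Nat.choose_zero_right,
          Nat.sub_zero, Nat.add_sub_cancel, one_mul, Nat.succ_eq_add_one]
        rw [ih n, ih (n + 1)]
        push_cast [Nat.factorial_succ]
        ring
      · -- injectivity of insert a on sets not containing a
        intro S hS T hT hST
        have haS : a ∉ S := fun h => ha ((Finset.mem_powersetCard.1 hS).1 h)
        have haT : a ∉ T := fun h => ha ((Finset.mem_powersetCard.1 hT).1 h)
        rw [← Finset.erase_insert haS, ← Finset.erase_insert haT, hST]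
      · -- disjointness
        rw [Finset.disjoint_left]
        intro S hS hS'
        obtain ⟨T, hT, rfl⟩ := Finset.mem_image.1 hS'
        exact ha ((Finset.mem_powersetCard.1 hS).1 (Finset.mem_insert_self a T))

lemma aux_pairing {A : Type*} [CommRing A] {ι : Type*} [DecidableEq ι] [Fintype ι]
    (z : ι → A) (hz : ∀ j, z j * z j = 0) (a k : ℕ) (r : Finset ι → A) :
    (∑ S ∈ (univ : Finset ι).powersetCard a, ∏ j ∈ S, z j) *
      (∑ T ∈ (univ : Finset ι).powersetCard k, r T * ∏ j ∈ T, z j) =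
    ∑ U ∈ (univ : Finset ι).powersetCard (a + k), (∑ T ∈ U.powersetCard k, r T) * ∏ j ∈ U, z j := by
  rw [Finset.sum_mul_sum, ← Finset.sum_product']
  have hsplit := Finset.sum_filter_add_sum_filter_not
    (((univ : Finset ι).powersetCard a) ×ˢ ((univ : Finset ι).powersetCard k))
    (fun p => Disjoint p.1 p.2)
    (fun p => (∏ j ∈ p.1, z j) * (r p.2 * ∏ j ∈ p.2, z j))
  rw [← hsplit]
  have hzero : ∑ p ∈ (((univ : Finset ι).powersetCard a) ×ˢ ((univ : Finset ι).powersetCard k)).filter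
      (fun p => ¬ Disjoint p.1 p.2), (∏ j ∈ p.1, z j) * (r p.2 * ∏ j ∈ p.2, z j) = 0 := by
    apply Finset.sum_eq_zero
    rintro ⟨S, T⟩ hp
    simp only [Finset.mem_filter] at hp
    obtain ⟨x, hxS, hxT⟩ := Finset.not_disjoint_iff.1 hp.2
    dsimp only
    have h2 : (∏ j ∈ S, z j) * (r T * ∏ j ∈ T, z j) =
        (z x * z x) * ((∏ j ∈ S.erase x, z j) * (r T * ∏ j ∈ T.erase x, z j)) := by
      rw [← Finset.mul_prod_erase _ _ hxS, ← Finset.mul_prod_erase _ _ hxT]; ring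
    rw [h2, hz, zero_mul]
  rw [hzero, add_zero]
  -- now the bijection
  have hrhs : ∀ U ∈ (univ : Finset ι).powersetCard (a + k),
      (∑ T ∈ U.powersetCard k, r T) * ∏ j ∈ U, z j =
      ∑ T ∈ U.powersetCard k, r T * ∏ j ∈ U, z j := by
    intro U _; rw [Finset.sum_mul]
  rw [Finset.sum_congr rfl hrhs]
  have hsig : ∑ U ∈ (univ : Finset ι).powersetCard (a + k), ∑ T ∈ U.powersetCard k,
        r T * ∏ j ∈ U, z j
      = ∑ q ∈ ((univ : Finset ι).powersetCard (a + k)).sigma (fun U => U.powersetCard k),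
        r q.2 * ∏ j ∈ q.1, z j :=
    (Finset.sum_sigma _ _ (fun q : (Σ _ : Finset ι, Finset ι) => r q.2 * ∏ j ∈ q.1, z j)).symm
  rw [hsig]
  refine Finset.sum_nbij' (fun p => ⟨p.1 ∪ p.2, p.2⟩) (fun q => (q.1 \ q.2, q.2)) ?_ ?_ ?_ ?_ ?_
  · rintro ⟨S, T⟩ hp
    simp only [Finset.mem_filter, Finset.mem_product, Finset.mem_powersetCard] at hp
    obtain ⟨⟨⟨hS, hSc⟩, ⟨hT, hTc⟩⟩, hd⟩ := hp
    refine Finset.mem_sigma.2 ⟨Finset.mem_powersetCard.2 ⟨Finset.subset_univ _, ?_⟩,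
      Finset.mem_powersetCard.2 ⟨Finset.subset_union_right, hTc⟩⟩
    rw [Finset.card_union_of_disjoint hd, hSc, hTc]
  · rintro ⟨U, T⟩ hq
    simp only [Finset.mem_sigma, Finset.mem_powersetCard] at hq
    obtain ⟨⟨hU, hUc⟩, hTU, hTc⟩ := hq
    simp only [Finset.mem_filter, Finset.mem_product, Finset.mem_powersetCard]
    refine ⟨⟨⟨Finset.subset_univ _, ?_⟩, ⟨Finset.subset_univ _, hTc⟩⟩, Finset.sdiff_disjoint⟩
    rw [Finset.card_sdiff_of_subset hTU, hUc, hTc, Nat.add_sub_cancel]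
  · rintro ⟨S, T⟩ hp
    simp only [Finset.mem_filter, Finset.mem_product] at hp
    simp only [Finset.union_sdiff_cancel_right hp.2]
  · rintro ⟨U, T⟩ hq
    simp only [Finset.mem_sigma, Finset.mem_powersetCard] at hq
    simp only [Finset.sdiff_union_of_subset hq.2.1]
  · rintro ⟨S, T⟩ hp
    simp only [Finset.mem_filter, Finset.mem_product] at hp
    dsimp only
    rw [Finset.prod_union hp.2]
    ring

lemma aux_key {A : Type*} [CommRing A] [Algebra ℝ A] {m : ℕ} (a k : ℕ)
    (z : Fin m → A) (hz : ∀ j, z j * z j = 0) (lam μ : Fin m → ℝ)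
    (hcoef : ∀ U ∈ (Finset.univ : Finset (Fin m)).powersetCard (a + k),
      (((a + k).factorial : ℝ) * ∏ j ∈ U, μ j) =
      ((a.factorial : ℝ) * (k.factorial : ℝ)) * ∑ T ∈ U.powersetCard k, ∏ j ∈ T, lam j) :
    (∑ j, μ j • z j) ^ (a + k) = (∑ j, z j) ^ a * (∑ j, lam j • z j) ^ k := by
  simp only [Algebra.smul_def]
  -- scaled square-zero elements
  have hzmu : ∀ j, (algebraMap ℝ A (μ j) * z j) * (algebraMap ℝ A (μ j) * z j) = 0 := by
    intro j
    rw [mul_mul_mul_comm, hz, mul_zero]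
  have hzlam : ∀ j, (algebraMap ℝ A (lam j) * z j) * (algebraMap ℝ A (lam j) * z j) = 0 := by
    intro j
    rw [mul_mul_mul_comm, hz, mul_zero]
  rw [aux_sum_pow_expand _ hzmu, aux_sum_pow_expand _ hz, aux_sum_pow_expand _ hzlam]
  have hprodmu : ∀ S : Finset (Fin m), ∏ j ∈ S, algebraMap ℝ A (μ j) * z j =
      algebraMap ℝ A (∏ j ∈ S, μ j) * ∏ j ∈ S, z j := by
    intro S; rw [Finset.prod_mul_distrib, map_prod]
  have hprodlam : ∀ S : Finset (Fin m), ∏ j ∈ S, algebraMap ℝ A (lam j) * z j =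
      algebraMap ℝ A (∏ j ∈ S, lam j) * ∏ j ∈ S, z j := by
    intro S; rw [Finset.prod_mul_distrib, map_prod]
  simp only [hprodmu, hprodlam]
  -- rearrange RHS to use pairing
  rw [show ((a.factorial : A) * ∑ S ∈ (univ : Finset (Fin m)).powersetCard a, ∏ j ∈ S, z j) *
        ((k.factorial : A) * ∑ T ∈ (univ : Finset (Fin m)).powersetCard k,
          algebraMap ℝ A (∏ j ∈ T, lam j) * ∏ j ∈ T, z j) =
      ((a.factorial : A) * (k.factorial : A)) *
        ((∑ S ∈ (univ : Finset (Fin m)).powersetCard a, ∏ j ∈ S, z j) *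
         (∑ T ∈ (univ : Finset (Fin m)).powersetCard k,
           algebraMap ℝ A (∏ j ∈ T, lam j) * ∏ j ∈ T, z j)) by ring]
  rw [aux_pairing z hz a k (fun T => algebraMap ℝ A (∏ j ∈ T, lam j))]
  rw [Finset.mul_sum, Finset.mul_sum]
  refine Finset.sum_congr rfl ?_
  intro U hU
  have h := congrArg (algebraMap ℝ A) (hcoef U hU)
  rw [map_mul, map_mul, map_mul, map_natCast, map_natCast, map_natCast, map_sum] at h
  rw [← mul_assoc, h]
  ring

lemma aux_exists_mu (m k : ℕ) (hm : 2 ≤ m) (hk : k ≤ m - 1) (lam : Fin m → ℝ)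
    (hlam : ∀ j, 0 < lam j) :
    ∃ μ : Fin m → ℝ, (∀ j, 0 < μ j) ∧
      ∀ U ∈ (Finset.univ : Finset (Fin m)).powersetCard (m - 1),
        ((m - 1).factorial : ℝ) * ∏ j ∈ U, μ j =
        (((m - 1 - k).factorial : ℝ) * (k.factorial : ℝ)) *
          ∑ T ∈ U.powersetCard k, ∏ j ∈ T, lam j := by
  set c : Fin m → ℝ := fun j =>
    ((((m - 1 - k).factorial : ℝ) * (k.factorial : ℝ)) *
      ∑ T ∈ ((univ : Finset (Fin m)).erase j).powersetCard k, ∏ i ∈ T, lam i) /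
    ((m - 1).factorial : ℝ) with hc_def
  have hcard_erase : ∀ j : Fin m, ((univ : Finset (Fin m)).erase j).card = m - 1 := by
    intro j
    rw [Finset.card_erase_of_mem (Finset.mem_univ j), Finset.card_univ, Fintype.card_fin]
  have hsum_pos : ∀ j : Fin m,
      0 < ∑ T ∈ ((univ : Finset (Fin m)).erase j).powersetCard k, ∏ i ∈ T, lam i := by
    intro j
    apply Finset.sum_pos
    · intro T _
      exact Finset.prod_pos fun i _ => hlam i
    · rw [Finset.powersetCard_nonempty, hcard_erase]
      exact hk
  have hc_pos : ∀ j, 0 < c j := by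
    intro j
    apply div_pos
    · apply mul_pos
      · positivity
      · exact hsum_pos j
    · positivity
  set L : ℝ := ∑ j, Real.log (c j) with hL
  set E : ℝ := Real.exp (L / (m - 1 : ℕ)) with hE
  have hE_pos : 0 < E := Real.exp_pos _
  have hm1 : ((m - 1 : ℕ) : ℝ) ≠ 0 := by
    have : m - 1 ≠ 0 := by omega
    exact_mod_cast Nat.cast_ne_zero.2 this
  have hEpow : E ^ (m - 1) = ∏ j, c j := by
    rw [hE, ← Real.exp_nat_mul, mul_div_cancel₀ _ hm1, hL, Real.exp_sum]
    exact Finset.prod_congr rfl fun j _ => Real.exp_log (hc_pos j)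
  refine ⟨fun j => E / c j, fun j => div_pos hE_pos (hc_pos j), ?_⟩
  intro U hU
  obtain ⟨hUsub, hUcard⟩ := Finset.mem_powersetCard.1 hU
  -- U = univ.erase j0 for some j0
  have hcompl : ((univ : Finset (Fin m)) \ U).card = 1 := by
    rw [Finset.card_sdiff_of_subset hUsub, Finset.card_univ, Fintype.card_fin, hUcard]
    omega
  obtain ⟨j0, hj0⟩ := Finset.card_eq_one.1 hcompl
  have hUeq : U = (univ : Finset (Fin m)).erase j0 := by
    rw [Finset.erase_eq, ← hj0, Finset.sdiff_sdiff_self_left]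
    exact (Finset.inter_eq_right.2 hUsub).symm
  -- compute the product of μ over U
  have hprod : ∏ j ∈ U, (E / c j) = c j0 := by
    rw [hUeq, Finset.prod_div_distrib, Finset.prod_const, hcard_erase j0]
    have h1 : E ^ (m - 1) = c j0 * ∏ j ∈ (univ : Finset (Fin m)).erase j0, c j := by
      rw [hEpow, Finset.mul_prod_erase _ _ (Finset.mem_univ j0)]
    rw [h1]
    have h2 : ∏ j ∈ (univ : Finset (Fin m)).erase j0, c j ≠ 0 :=
      ne_of_gt (Finset.prod_pos fun j _ => hc_pos j)
    field_simp
  rw [hprod, hUeq]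
  rw [hc_def]
  have h3 : ((m - 1).factorial : ℝ) ≠ 0 := by positivity
  field_simp

/-- With `ω = Σ_j e_j* ∧ Je_j*` and `ω₁ = Σ_j λ_j e_j* ∧ Je_j*`
(all `λ_j > 0`) two compatible positive forms written in a common J-adapted basis
(encoded in the exterior algebra over `W = (Fin m → ℝ) × (Fin m → ℝ)`),
for every `0 ≤ k ≤ m-1` there is a positive J-(1,1) form
`ω⁽ᵏ⁾ = Σ_j μ_j e_j* ∧ Je_j*` with all `μ_j > 0` and `(ω⁽ᵏ⁾)^{m-1} = ω^{m-1-k} ∧ ω₁^k`. -/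
theorem stmt1 (m : ℕ) (hm : 1 ≤ m) (lam : Fin m → ℝ) (hlam : ∀ j, 0 < lam j)
    (k : ℕ) (hk : k ≤ m - 1) :
    let W := (Fin m → ℝ) × (Fin m → ℝ)
    let estar : Fin m → ExteriorAlgebra ℝ W := fun j => ι ℝ (Pi.single j (1:ℝ), 0)
    let fstar : Fin m → ExteriorAlgebra ℝ W := fun j => ι ℝ (0, Pi.single j (1:ℝ))
    let ω : ExteriorAlgebra ℝ W := ∑ j : Fin m, estar j * fstar j
    let ω₁ : ExteriorAlgebra ℝ W := ∑ j : Fin m, lam j • (estar j * fstar j)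
    ∃ μ : Fin m → ℝ, (∀ j, 0 < μ j) ∧
      (∑ j : Fin m, μ j • (estar j * fstar j)) ^ (m - 1) = ω ^ (m - 1 - k) * ω₁ ^ k := by
  intro W estar fstar ω ω₁
  show ∃ μ : Fin m → ℝ, (∀ j, 0 < μ j) ∧
      (∑ j : Fin m, μ j • (estar j * fstar j)) ^ (m - 1) =
      (∑ j : Fin m, estar j * fstar j) ^ (m - 1 - k) *
      (∑ j : Fin m, lam j • (estar j * fstar j)) ^ k
  set t : Fin m → ExteriorAlgebra ℝ W := fun j => estar j * fstar j with ht
  have hsq : ∀ j, t j * t j = 0 := fun j => aux_pair_sq_zero _ _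
  have hcomm : ∀ i j, t i * t j = t j * t i := fun i j => aux_pair_comm _ _ _ _
  rcases Nat.lt_or_ge m 2 with hm2 | hm2
  · -- m = 1 : all exponents are zero
    have hm1 : m - 1 = 0 := by omega
    have hk0 : k = 0 := by omega
    refine ⟨fun _ => 1, fun _ => one_pos, ?_⟩
    simp [hm1, hk0]
  · obtain ⟨μ, hμpos, hμ⟩ := aux_exists_mu m k hm2 hk lam hlam
    refine ⟨μ, hμpos, ?_⟩
    set S : Set (ExteriorAlgebra ℝ W) := Set.range t with hS
    have hcomm' : ∀ a ∈ S, ∀ b ∈ S, a * b = b * a := by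
      rintro _ ⟨i, rfl⟩ _ ⟨j, rfl⟩; exact hcomm i j
    letI : CommRing (Algebra.adjoin ℝ S) := Algebra.adjoinCommRingOfComm ℝ hcomm'
    set z : Fin m → Algebra.adjoin ℝ S := fun j => ⟨t j, Algebra.subset_adjoin ⟨j, rfl⟩⟩ with hz
    have hzsq : ∀ j, z j * z j = 0 := by
      intro j
      apply Subtype.ext
      show t j * t j = 0
      exact hsq j
    have hak : m - 1 - k + k = m - 1 := by omega
    have hcoef : ∀ U ∈ (Finset.univ : Finset (Fin m)).powersetCard (m - 1 - k + k),
        (((m - 1 - k + k).factorial : ℝ) * ∏ j ∈ U, μ j) =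
        (((m - 1 - k).factorial : ℝ) * (k.factorial : ℝ)) *
          ∑ T ∈ U.powersetCard k, ∏ j ∈ T, lam j := by
      rw [hak]; exact hμ
    have key := aux_key (m - 1 - k) k z hzsq lam μ hcoef
    rw [hak] at key
    have h2 := congrArg (Subalgebra.val (Algebra.adjoin ℝ S)) key
    simpa only [map_pow, map_mul, map_sum, map_smul, Subalgebra.coe_val] using h2
end

section
/- Let (V, J, ω) be a 2m-dimensional real vector space with compatible complex structure and symplectic form, m ≥ 2. If β is a real 3-form of type (1,2)+(2,1) and α is a real 1-form, then the 2m-form α ∧ Jβ ∧ ω^{m-2} equals -(Jα) ∧ β ∧ ω^{m-2}, i.e. only the J-invariant (2,2)-component of α ∧ Jβ contributes after wedging with ω^{m-2}, and J acting on the pair (α, β) changes the pairing by a sign. -/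
open ExteriorAlgebra

/-- The complex structure on the complexified coframe space. -/
noncomputable def Jdef (m : ℕ) : ((Fin m → ℂ) × (Fin m → ℂ)) →ₗ[ℂ] ((Fin m → ℂ) × (Fin m → ℂ)) :=
  LinearMap.prodMap (Complex.I • LinearMap.id) ((-Complex.I) • LinearMap.id)

lemma Jdef_basis (m : ℕ) (s : Fin m ⊕ Fin m) :
    Jdef m (((Pi.basisFun ℂ (Fin m)).prod (Pi.basisFun ℂ (Fin m))) s) =
      (Sum.elim (fun _ => Complex.I) (fun _ => -Complex.I) s) •
        ((Pi.basisFun ℂ (Fin m)).prod (Pi.basisFun ℂ (Fin m))) s := by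
  rcases s with j | j <;>
    · apply Prod.ext <;>
        simp [Jdef, Module.Basis.prod_apply_inl_fst, Module.Basis.prod_apply_inl_snd,
          Module.Basis.prod_apply_inr_fst, Module.Basis.prod_apply_inr_snd]

lemma ιMulti_J (m : ℕ) (v : Fin (2 * m) → (Fin m → ℂ) × (Fin m → ℂ)) :
    ιMulti ℂ (2 * m) (Jdef m ∘ v) = ιMulti ℂ (2 * m) v := by
  have hA : (ιMulti ℂ (2 * m) (M := (Fin m → ℂ) × (Fin m → ℂ))).compLinearMap (Jdef m) =
      ιMulti ℂ (2 * m) := by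
    apply Module.Basis.ext_alternating ((Pi.basisFun ℂ (Fin m)).prod (Pi.basisFun ℂ (Fin m)))
    intro w hw
    set b := (Pi.basisFun ℂ (Fin m)).prod (Pi.basisFun ℂ (Fin m)) with hb
    set c : Fin m ⊕ Fin m → ℂ := Sum.elim (fun _ => Complex.I) (fun _ => -Complex.I) with hc
    rw [AlternatingMap.compLinearMap_apply]
    have h1 : (fun i => Jdef m (b (w i))) = fun i => c (w i) • b (w i) :=
      funext fun i => Jdef_basis m (w i)
    rw [h1]
    have h2 : ιMulti ℂ (2 * m) (fun i => c (w i) • b (w i)) =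
        (∏ i, c (w i)) • ιMulti ℂ (2 * m) (fun i => b (w i)) :=
      (ιMulti ℂ (2 * m)).toMultilinearMap.map_smul_univ (fun i => c (w i)) (fun i => b (w i))
    rw [h2]
    have hbij : Function.Bijective w := by
      rw [Fintype.bijective_iff_injective_and_card]
      exact ⟨hw, by simp [two_mul]⟩
    have h3 : ∏ i, c (w i) = ∏ s, c s :=
      Fintype.prod_bijective w hbij _ _ (fun i => rfl)
    have h4 : ∏ s, c s = 1 := by
      rw [Fintype.prod_sum_type]
      simp only [hc, Sum.elim_inl, Sum.elim_inr, Finset.prod_const, Finset.card_univ,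
        Fintype.card_fin]
      rw [← mul_pow]
      simp [Complex.I_mul_I]
    rw [h3, h4, one_smul]
  calc ιMulti ℂ (2 * m) (Jdef m ∘ v)
      = ((ιMulti ℂ (2 * m)).compLinearMap (Jdef m)) v := rfl
    _ = ιMulti ℂ (2 * m) v := by rw [hA]

/-- `J` acts as the identity on the top exterior power. -/
lemma topFix (m : ℕ) (x : ExteriorAlgebra ℂ ((Fin m → ℂ) × (Fin m → ℂ)))
    (hx : x ∈ (LinearMap.range (ι ℂ : ((Fin m → ℂ) × (Fin m → ℂ)) →ₗ[ℂ]
        ExteriorAlgebra ℂ ((Fin m → ℂ) × (Fin m → ℂ)))) ^ (2 * m)) :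
    ExteriorAlgebra.map (Jdef m) x = x := by
  have hx' : x ∈ Submodule.span ℂ (Set.range (ιMulti ℂ (2 * m)
      (M := (Fin m → ℂ) × (Fin m → ℂ)))) := by
    rw [ιMulti_span_fixedDegree]; exact hx
  refine Submodule.span_induction ?_ (map_zero _) ?_ ?_ hx'
  · rintro _ ⟨v, rfl⟩
    rw [map_apply_ιMulti, ιMulti_J]
  · intro a b _ _ ha hb
    rw [map_add, ha, hb]
  · intro c a _ h
    rw [map_smul, h]

set_option maxHeartbeats 1000000 in
/-- Let `(V, J, ω)` be a `2m`-dimensional vector space with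
compatible complex structure and symplectic form, `m ≥ 2`, encoded via the
complexified coframe `dz_1, …, dz_m, d̄z_1, …, d̄z_m` (so the complexified dual is
`W = (Fin m → ℂ) × (Fin m → ℂ)`, `ω = (√-1/2) Σ_j dz_j ∧ d̄z_j`, and `J` acts on
forms as the algebra extension of `J dz_j = √-1 dz_j`, `J d̄z_j = -√-1 d̄z_j`,
which on `k`-forms is `γ ↦ (-1)^k γ(J·,…,J·)`).  If `β` is a 3-form of type
`(1,2)+(2,1)` and `α` a 1-form, then `α ∧ Jβ ∧ ω^{m-2} = -(Jα) ∧ β ∧ ω^{m-2}`. -/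
theorem stmt14 (m : ℕ) (hm : 2 ≤ m) :
    let W := (Fin m → ℂ) × (Fin m → ℂ)
    let dz : Fin m → ExteriorAlgebra ℂ W := fun j => ι ℂ (Pi.single j (1:ℂ), 0)
    let dzb : Fin m → ExteriorAlgebra ℂ W := fun j => ι ℂ (0, Pi.single j (1:ℂ))
    let ω : ExteriorAlgebra ℂ W := (Complex.I / 2) • ∑ j : Fin m, dz j * dzb j
    let Jc : W →ₗ[ℂ] W :=
      LinearMap.prodMap (Complex.I • LinearMap.id) ((-Complex.I) • LinearMap.id)
    let Jmap := ExteriorAlgebra.map Jc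
    ∀ α β : ExteriorAlgebra ℂ W,
      α ∈ LinearMap.range (ι ℂ : W →ₗ[ℂ] ExteriorAlgebra ℂ W) →
      β ∈ Submodule.span ℂ {x : ExteriorAlgebra ℂ W |
          (∃ i j k, x = dz i * dz j * dzb k) ∨ (∃ i j k, x = dz i * dzb j * dzb k)} →
      α * Jmap β * ω ^ (m - 2) = -(Jmap α * (β * ω ^ (m - 2))) := by
  intro W dz dzb ω Jc Jmap α β hα hβ
  set P : Submodule ℂ (ExteriorAlgebra ℂ W) :=
    LinearMap.range (ι ℂ : W →ₗ[ℂ] ExteriorAlgebra ℂ W) with hP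
  -- action of J on the generators
  have hJdz : ∀ j, Jmap (dz j) = Complex.I • dz j := by
    intro j
    show ExteriorAlgebra.map Jc (ι ℂ _) = _
    rw [map_apply_ι]
    have : Jc ((Pi.single j (1:ℂ), 0) : W) = Complex.I • ((Pi.single j (1:ℂ), 0) : W) := by
      show (LinearMap.prodMap (Complex.I • LinearMap.id) ((-Complex.I) • LinearMap.id))
          ((Pi.single j (1:ℂ), 0) : W) = _
      apply Prod.ext <;>
        simp [LinearMap.prodMap_apply, LinearMap.smul_apply, LinearMap.id_apply]
    rw [this, map_smul]
  have hJdzb : ∀ j, Jmap (dzb j) = (-Complex.I) • dzb j := by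
    intro j
    show ExteriorAlgebra.map Jc (ι ℂ _) = _
    rw [map_apply_ι]
    have : Jc ((0, Pi.single j (1:ℂ)) : W) = (-Complex.I) • ((0, Pi.single j (1:ℂ)) : W) := by
      show (LinearMap.prodMap (Complex.I • LinearMap.id) ((-Complex.I) • LinearMap.id))
          ((0, Pi.single j (1:ℂ)) : W) = _
      apply Prod.ext <;>
        simp [LinearMap.prodMap_apply, LinearMap.smul_apply, LinearMap.id_apply]
    rw [this, map_smul]
  -- J fixes ω
  have hJω : Jmap ω = ω := by
    show ExteriorAlgebra.map Jc _ = _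
    rw [map_smul, map_sum]
    congr 1
    apply Finset.sum_congr rfl
    intro j _
    rw [map_mul]
    show Jmap (dz j) * Jmap (dzb j) = _
    rw [hJdz, hJdzb, smul_mul_assoc, mul_smul_comm, smul_smul]
    simp [Complex.I_mul_I]
  -- J² = -1 on β
  have hJgen1 : ∀ i j k, Jmap (dz i * dz j * dzb k) = Complex.I • (dz i * dz j * dzb k) := by
    intro i j k
    rw [map_mul, map_mul, hJdz, hJdz, hJdzb]
    simp only [smul_mul_assoc, mul_smul_comm, smul_smul]
    norm_num [Complex.I_mul_I]
  have hJgen2 : ∀ i j k, Jmap (dz i * dzb j * dzb k) = (-Complex.I) • (dz i * dzb j * dzb k) := by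
    intro i j k
    rw [map_mul, map_mul, hJdz, hJdzb, hJdzb]
    simp only [smul_mul_assoc, mul_smul_comm, smul_smul]
    norm_num [Complex.I_mul_I]
  have hJJβ : Jmap (Jmap β) = -β := by
    refine Submodule.span_induction ?_ (by rw [map_zero, map_zero, neg_zero]) ?_ ?_ hβ
    · rintro x (⟨i, j, k, rfl⟩ | ⟨i, j, k, rfl⟩)
      · rw [hJgen1, map_smul, hJgen1, smul_smul, Complex.I_mul_I, neg_one_smul]
      · rw [hJgen2, map_smul, hJgen2, smul_smul]
        norm_num [Complex.I_mul_I]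
    · intro a b _ _ ha hb
      rw [map_add, map_add, ha, hb, neg_add]
    · intro c a _ h
      rw [map_smul, map_smul, h, smul_neg]
  -- membership of Jmap β in P ^ 3
  have h3 : ∀ u v w : W, ι ℂ u * ι ℂ v * ι ℂ w ∈ P ^ 3 := by
    intro u v w
    have : P ^ 3 = P * P * P := by
      rw [pow_succ, pow_succ, pow_one]
    rw [this]
    exact Submodule.mul_mem_mul (Submodule.mul_mem_mul (LinearMap.mem_range_self _ u)
      (LinearMap.mem_range_self _ v)) (LinearMap.mem_range_self _ w)
  have hβ3 : β ∈ P ^ 3 := by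
    refine Submodule.span_le.2 ?_ hβ
    rintro x (⟨i, j, k, rfl⟩ | ⟨i, j, k, rfl⟩) <;> exact h3 _ _ _
  have hJβ3 : Jmap β ∈ P ^ 3 := by
    refine Submodule.span_induction ?_ (by rw [map_zero]; exact zero_mem _) ?_ ?_ hβ
    · rintro x (⟨i, j, k, rfl⟩ | ⟨i, j, k, rfl⟩)
      · rw [hJgen1]; exact Submodule.smul_mem _ _ (h3 _ _ _)
      · rw [hJgen2]; exact Submodule.smul_mem _ _ (h3 _ _ _)
    · intro a b _ _ ha hb
      rw [map_add]; exact add_mem ha hb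
    · intro c a _ h
      rw [map_smul]; exact Submodule.smul_mem _ _ h
  -- ω powers
  have hω2 : ω ∈ P ^ 2 := by
    refine Submodule.smul_mem _ _ (Submodule.sum_mem _ ?_)
    intro j _
    rw [pow_two]
    exact Submodule.mul_mem_mul (LinearMap.mem_range_self _ _) (LinearMap.mem_range_self _ _)
  have hωpow : ω ^ (m - 2) ∈ P ^ (2 * (m - 2)) := by
    rw [pow_mul]
    exact Submodule.pow_mem_pow _ hω2 _
  -- the top form
  have hγ : α * Jmap β * ω ^ (m - 2) ∈ P ^ (2 * m) := by
    have harith : 2 * m = 1 + 3 + 2 * (m - 2) := by omega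
    rw [harith, pow_add, pow_add, pow_one]
    exact Submodule.mul_mem_mul (Submodule.mul_mem_mul hα hJβ3) hωpow
  have key : Jmap (α * Jmap β * ω ^ (m - 2)) = α * Jmap β * ω ^ (m - 2) :=
    topFix m _ hγ
  calc α * Jmap β * ω ^ (m - 2)
      = Jmap (α * Jmap β * ω ^ (m - 2)) := key.symm
    _ = Jmap α * Jmap (Jmap β) * Jmap (ω ^ (m - 2)) := by rw [map_mul, map_mul]
    _ = Jmap α * (-β) * ω ^ (m - 2) := by rw [hJJβ, map_pow, hJω]
    _ = -(Jmap α * (β * ω ^ (m - 2))) := by rw [mul_neg, neg_mul, mul_assoc]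
end
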